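/- Let V ⊆ ℝⁿ be a nontrivial subspace. Then MinSupp(V) ∩ S₁^{n-1} = Ext(V ∩ B₁ⁿ): the vectors of minimal support in V with unit ℓ₁-norm are exactly the extreme points of the intersection of V with the closed unit ℓ₁-ball. -/

import Mathlib

/-- The ℓ₁ norm of a vector in ℝⁿ. -/
noncomputable def l1 {n : ℕ} (x : Fin n → ℝ) : ℝ := ∑ i, |x i|

/-- The set of vectors of minimal support in a subspace `V ⊆ ℝⁿ`: the nonzero `x ∈ V`
such that no nonzero `y ∈ V` has support strictly contained in the support of `x`. -/
def MinSupp {n : ℕ} (V : Submodule ℝ (Fin n → ℝ)) : Set (Fin n → ℝ) :=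
  {x | x ∈ V ∧ x ≠ 0 ∧
    ¬∃ y : Fin n → ℝ, y ∈ V ∧ y ≠ 0 ∧ Function.support y ⊂ Function.support x}

lemma l1_nonneg {n : ℕ} (x : Fin n → ℝ) : 0 ≤ l1 x :=
  Finset.sum_nonneg fun _ _ => abs_nonneg _

lemma l1_pos {n : ℕ} {x : Fin n → ℝ} (hx : x ≠ 0) : 0 < l1 x := by
  obtain ⟨i, hi⟩ := Function.ne_iff.mp hx
  exact Finset.sum_pos' (fun j _ => abs_nonneg _) ⟨i, Finset.mem_univ i, abs_pos.mpr hi⟩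

lemma l1_smul {n : ℕ} (c : ℝ) (x : Fin n → ℝ) : l1 (c • x) = |c| * l1 x := by
  simp [l1, abs_mul, Finset.mul_sum]

lemma sign_mul_self7 (a : ℝ) : Real.sign a * a = |a| := by
  rcases lt_trichotomy a 0 with h | h | h
  · rw [Real.sign_of_neg h, abs_of_neg h]; ring
  · simp [h]
  · rw [Real.sign_of_pos h, abs_of_pos h]; ring

lemma abs_add_sign {a b : ℝ} (h : |b| ≤ |a|) : |a + b| = |a| + Real.sign a * b := by
  obtain ⟨h1, h2⟩ := abs_le.mp h
  rcases lt_trichotomy a 0 with ha | ha | ha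
  · rw [abs_of_neg ha] at h1 h2
    rw [Real.sign_of_neg ha, abs_of_neg ha, abs_of_nonpos (by linarith)]; ring
  · subst ha
    have hb : b = 0 := abs_eq_zero.mp (le_antisymm (by simpa using h) (abs_nonneg b))
    simp [hb]
  · rw [abs_of_pos ha] at h1 h2
    rw [Real.sign_of_pos ha, abs_of_pos ha, abs_of_nonneg (by linarith)]; ring

lemma l1_add_smul {n : ℕ} (x y : Fin n → ℝ) (t : ℝ) (h : ∀ i, |t * y i| ≤ |x i|) :
    l1 (x + t • y) = l1 x + t * ∑ i, Real.sign (x i) * y i := by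
  unfold l1
  rw [Finset.mul_sum, ← Finset.sum_add_distrib]
  refine Finset.sum_congr rfl fun i _ => ?_
  have h2 := abs_add_sign (h i)
  simp only [Pi.add_apply, Pi.smul_apply, smul_eq_mul]
  rw [h2]; ring

lemma exists_eps {n : ℕ} {x y : Fin n → ℝ} (hy : y ≠ 0)
    (hsupp : Function.support y ⊆ Function.support x) :
    ∃ ε : ℝ, 0 < ε ∧ ∀ i, ε * |y i| ≤ |x i| := by
  obtain ⟨i0, _⟩ := Function.ne_iff.mp hy
  have hne : (Finset.univ : Finset (Fin n)).Nonempty := ⟨i0, Finset.mem_univ _⟩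
  set f : Fin n → ℝ := fun i => if y i = 0 then 1 else |x i| / |y i| with hf
  refine ⟨Finset.univ.inf' hne f, ?_, ?_⟩
  · rw [Finset.lt_inf'_iff]
    intro i _
    by_cases hyi : y i = 0
    · simp [hf, hyi]
    · have hxi : x i ≠ 0 := hsupp hyi
      simp only [hf, hyi, if_false]
      exact div_pos (abs_pos.mpr hxi) (abs_pos.mpr hyi)
  · intro i
    by_cases hyi : y i = 0
    · simp [hyi, abs_nonneg]
    · have h1 : Finset.univ.inf' hne f ≤ f i := Finset.inf'_le _ (Finset.mem_univ i)
      rw [hf] at h1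
      simp only [hyi, if_false] at h1
      rw [← le_div_iff₀ (abs_pos.mpr hyi)]
      exact h1

lemma minsupp_scalar {n : ℕ} {V : Submodule ℝ (Fin n → ℝ)} {x : Fin n → ℝ}
    (hx : x ∈ MinSupp V) {v : Fin n → ℝ} (hv : v ∈ V)
    (hs : Function.support v ⊆ Function.support x) : ∃ c : ℝ, v = c • x := by
  obtain ⟨hxV, hx0, hmin⟩ := hx
  by_cases hv0 : v = 0
  · exact ⟨0, by simp [hv0]⟩
  obtain ⟨i, hi⟩ := Function.ne_iff.mp hv0
  have hxi : x i ≠ 0 := hs hi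
  set c := v i / x i with hc
  have hw : v - c • x ∈ V := V.sub_mem hv (V.smul_mem _ hxV)
  by_cases hw0 : v - c • x = 0
  · exact ⟨c, by rwa [sub_eq_zero] at hw0⟩
  exfalso; apply hmin
  refine ⟨v - c • x, hw, hw0, ?_, ?_⟩
  · intro j hj
    by_contra hxj
    simp only [Function.mem_support, not_not] at hxj
    have hvj : v j = 0 := by
      by_contra hvj
      exact (hs hvj) hxj
    simp [Function.mem_support, Pi.sub_apply, Pi.smul_apply, hvj, hxj] at hj
  · intro hsub
    have : (v - c • x) i ≠ 0 := hsub hxi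
    apply this
    simp only [Pi.sub_apply, Pi.smul_apply, smul_eq_mul, hc]
    field_simp
    ring

/-- Let `V ⊆ ℝⁿ` be a nontrivial subspace.  Then
`MinSupp(V) ∩ S₁^{n-1} = Ext(V ∩ B₁ⁿ)`: the unit-ℓ₁-norm vectors of minimal support in `V`
are exactly the extreme points of `V ∩ B₁ⁿ`. -/
theorem stmt7 {n : ℕ} (V : Submodule ℝ (Fin n → ℝ)) (hV : V ≠ ⊥) :
    MinSupp V ∩ {x | l1 x = 1}
      = Set.extremePoints ℝ ((V : Set (Fin n → ℝ)) ∩ {x | l1 x ≤ 1}) := by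
  ext x
  simp only [Set.mem_inter_iff, Set.mem_setOf_eq, mem_extremePoints]
  constructor
  · rintro ⟨hms, hx1⟩
    obtain ⟨hxV, hx0, hmin⟩ := hms
    refine ⟨⟨hxV, le_of_eq hx1⟩, ?_⟩
    rintro x₁ ⟨h1V, h1b⟩ x₂ ⟨h2V, h2b⟩ hseg
    rw [openSegment, Set.mem_setOf_eq] at hseg
    obtain ⟨a, b, ha, hb, hab, hx⟩ := hseg
    have hxi : ∀ i, x i = a * x₁ i + b * x₂ i := fun i => by
      rw [← hx]; simp
    have hle : ∀ i, |x i| ≤ a * |x₁ i| + b * |x₂ i| := fun i => by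
      rw [hxi i]
      calc |a * x₁ i + b * x₂ i| ≤ |a * x₁ i| + |b * x₂ i| := abs_add_le _ _
        _ = a * |x₁ i| + b * |x₂ i| := by
            rw [abs_mul, abs_mul, abs_of_pos ha, abs_of_pos hb]
    have hsum_eq : ∑ i, (a * |x₁ i| + b * |x₂ i| - |x i|)
        = a * l1 x₁ + b * l1 x₂ - l1 x := by
      simp [l1, Finset.sum_sub_distrib, Finset.sum_add_distrib, Finset.mul_sum]
    have hsum0 : ∑ i, (a * |x₁ i| + b * |x₂ i| - |x i|) = 0 := by
      have h1 : a * l1 x₁ + b * l1 x₂ - l1 x ≤ 0 := by nlinarith [hx1, h1b, h2b]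
      have h2 : 0 ≤ ∑ i, (a * |x₁ i| + b * |x₂ i| - |x i|) :=
        Finset.sum_nonneg fun i _ => by linarith [hle i]
      rw [hsum_eq] at h2 ⊢
      linarith
    have hterm : ∀ i, a * |x₁ i| + b * |x₂ i| - |x i| = 0 := by
      intro i
      have := (Finset.sum_eq_zero_iff_of_nonneg
        (fun i _ => by linarith [hle i] : ∀ i ∈ Finset.univ,
          (0:ℝ) ≤ a * |x₁ i| + b * |x₂ i| - |x i|)).mp hsum0
      exact this i (Finset.mem_univ i)
    -- norms are 1
    have hn1 : l1 x₁ = 1 ∧ l1 x₂ = 1 := by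
      have := hsum_eq ▸ hsum0
      constructor <;> nlinarith [h1b, h2b, hx1]
    -- supports included
    have hs1 : Function.support x₁ ⊆ Function.support x := by
      intro i hi
      simp only [Function.mem_support] at hi ⊢
      intro hxi0
      have := hterm i
      rw [hxi0] at this
      simp only [abs_zero, sub_zero] at this
      nlinarith [abs_pos.mpr hi, abs_nonneg (x₂ i)]
    have hs2 : Function.support x₂ ⊆ Function.support x := by
      intro i hi
      simp only [Function.mem_support] at hi ⊢
      intro hxi0
      have := hterm i
      rw [hxi0] at this
      simp only [abs_zero, sub_zero] at this
      nlinarith [abs_pos.mpr hi, abs_nonneg (x₁ i)]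
    obtain ⟨c, hc⟩ := minsupp_scalar ⟨hxV, hx0, hmin⟩ h1V hs1
    obtain ⟨d, hd⟩ := minsupp_scalar ⟨hxV, hx0, hmin⟩ h2V hs2
    have hcabs : |c| = 1 := by
      have := hn1.1
      rw [hc, l1_smul, hx1, mul_one] at this
      exact this
    have hdabs : |d| = 1 := by
      have := hn1.2
      rw [hd, l1_smul, hx1, mul_one] at this
      exact this
    obtain ⟨i0, hi0⟩ := Function.ne_iff.mp hx0
    have hcd : a * c + b * d = 1 := by
      have h := hxi i0
      rw [hc, hd] at h
      simp only [Pi.smul_apply, smul_eq_mul] at h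
      have : (a * c + b * d) * x i0 = 1 * x i0 := by ring_nf; linarith [h]
      exact mul_right_cancel₀ hi0 this
    have hc1 : c = 1 := by
      rcases abs_eq (by norm_num : (0:ℝ) ≤ 1) |>.mp hcabs with h | h
      · exact h
      · exfalso
        rcases abs_eq (by norm_num : (0:ℝ) ≤ 1) |>.mp hdabs with h' | h' <;>
          rw [h, h'] at hcd <;> nlinarith
    have hd1 : d = 1 := by
      rcases abs_eq (by norm_num : (0:ℝ) ≤ 1) |>.mp hdabs with h | h
      · exact h
      · exfalso
        rw [hc1, h] at hcd; nlinarith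
    rw [hc, hc1, one_smul, hd, hd1, one_smul]
    exact ⟨rfl, rfl⟩
  · rintro ⟨⟨hxV, hxb⟩, hext⟩
    have hx0 : x ≠ 0 := by
      rintro rfl
      obtain ⟨v, hvV, hv0⟩ := Submodule.exists_mem_ne_zero_of_ne_bot hV
      have hlv : 0 < l1 v := l1_pos hv0
      set u := (l1 v)⁻¹ • v with hu
      have huV : u ∈ V := V.smul_mem _ hvV
      have hu1 : l1 u = 1 := by
        rw [hu, l1_smul, abs_of_pos (inv_pos.mpr hlv), inv_mul_cancel₀ hlv.ne']
      have hu0 : u ≠ 0 := smul_ne_zero (inv_ne_zero hlv.ne') hv0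
      have hnu1 : l1 (-u) = 1 := by
        have h : (-u) = (-1 : ℝ) • u := by module
        rw [h, l1_smul]; simp [hu1]
      have hmemseg : (0 : Fin n → ℝ) ∈ openSegment ℝ u (-u) := by
        rw [openSegment, Set.mem_setOf_eq]
        exact ⟨1/2, 1/2, by norm_num, by norm_num, by norm_num, by module⟩
      have := (hext u ⟨huV, le_of_eq hu1⟩ (-u) ⟨V.neg_mem huV, le_of_eq hnu1⟩ hmemseg).1
      exact hu0 this
    have hx1 : l1 x = 1 := by
      by_contra hne
      have hlt : l1 x < 1 := lt_of_le_of_ne hxb hne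
      have hlx : 0 < l1 x := l1_pos hx0
      set u := (l1 x)⁻¹ • x with hu
      have hu1 : l1 u = 1 := by
        rw [hu, l1_smul, abs_of_pos (inv_pos.mpr hlx), inv_mul_cancel₀ hlx.ne']
      have hseg : x ∈ openSegment ℝ u 0 := by
        rw [openSegment, Set.mem_setOf_eq]
        refine ⟨l1 x, 1 - l1 x, hlx, by linarith, by ring, ?_⟩
        rw [hu, smul_smul, mul_inv_cancel₀ hlx.ne', one_smul, smul_zero, add_zero]
      have huq := (hext u ⟨V.smul_mem _ hxV, le_of_eq hu1⟩ 0
        ⟨V.zero_mem, by norm_num [l1]⟩ hseg).1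
      exact hne (huq ▸ hu1)
    refine ⟨⟨hxV, hx0, ?_⟩, hx1⟩
    rintro ⟨y, hyV, hy0, hss⟩
    obtain ⟨hsub, hnsub⟩ := hss
    obtain ⟨j, hj1, hj2⟩ := Set.not_subset.mp hnsub
    have hxj : x j ≠ 0 := hj1
    have hyj : y j = 0 := by simpa [Function.mem_support] using hj2
    set s := ∑ i, Real.sign (x i) * y i with hs
    set y' := y - s • x with hy'
    have hy'V : y' ∈ V := V.sub_mem hyV (V.smul_mem _ hxV)
    have hy'supp : Function.support y' ⊆ Function.support x := by
      intro i hi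
      simp only [Function.mem_support, ne_eq] at hi ⊢
      intro hxi
      apply hi
      have hyi : y i = 0 := by
        by_contra h
        exact (hsub h) hxi
      simp [hy', hyi, hxi]
    have hy'0 : y' ≠ 0 := by
      intro h
      have h' : y = s • x := by rwa [hy', sub_eq_zero] at h
      have hj : y j = s * x j := by rw [h']; simp
      have hs0 : s = 0 := by
        rcases mul_eq_zero.mp (hyj ▸ hj.symm) with h0 | h0
        · exact h0
        · exact absurd h0 hxj
      apply hy0
      rw [h', hs0, zero_smul]
    have hsum' : ∑ i, Real.sign (x i) * y' i = 0 := by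
      have hterm : ∀ i, Real.sign (x i) * y' i
          = Real.sign (x i) * y i - s * (Real.sign (x i) * x i) := by
        intro i
        simp only [hy', Pi.sub_apply, Pi.smul_apply, smul_eq_mul]
        ring
      rw [Finset.sum_congr rfl (fun i _ => hterm i), Finset.sum_sub_distrib,
        ← Finset.mul_sum]
      have hsx : ∑ i, Real.sign (x i) * x i = l1 x :=
        Finset.sum_congr rfl fun i _ => sign_mul_self7 _
      rw [hsx, hx1, mul_one, ← hs, sub_self]
    obtain ⟨ε, hε, hεle⟩ := exists_eps hy'0 hy'supp
    have habs : ∀ i, |ε * y' i| ≤ |x i| := fun i => by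
      rw [abs_mul, abs_of_pos hε]; exact hεle i
    have habs' : ∀ i, |(-ε) * y' i| ≤ |x i| := fun i => by
      rw [abs_mul, abs_neg, abs_of_pos hε]; exact hεle i
    have hl1p : l1 (x + ε • y') = 1 := by
      rw [l1_add_smul x y' ε habs, hsum', hx1]; ring
    have hl1m : l1 (x + (-ε) • y') = 1 := by
      rw [l1_add_smul x y' (-ε) habs', hsum', hx1]; ring
    have hseg : x ∈ openSegment ℝ (x + ε • y') (x + (-ε) • y') := by
      rw [openSegment, Set.mem_setOf_eq]
      exact ⟨1/2, 1/2, by norm_num, by norm_num, by norm_num, by module⟩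
    have heq := (hext _ ⟨V.add_mem hxV (V.smul_mem _ hy'V), le_of_eq hl1p⟩
        _ ⟨V.add_mem hxV (V.smul_mem _ hy'V), le_of_eq hl1m⟩ hseg).1
    have hz : ε • y' = 0 := by
      have := congrArg (fun z => z - x) heq
      simpa using this
    exact hy'0 ((smul_eq_zero.mp hz).resolve_left hε.ne')
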